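/- Let F be a field, p monic irreducible of degree d with companion matrix x_p, and J(p, n) = id_n ⊗ x_p + N_n ⊗ id_d the generalized Jordan block. Then every matrix Δ with Δ J(p, m) = J(p, n) Δ commutes with the action of K = F[X]/(p) (i.e. Δ is K-linear as a map K^m → K^n) and satisfies Δ N_m = N_n Δ over K; conversely every such K-linear intertwiner of the shifts intertwines the Jordan blocks. In particular dim_F C_F(J(p,m), J(p,n)) = d · min(m, n). -/

import Mathlib

open Matrix Kronecker

/-- The `k×k` nilpotent Jordan block (upper shift matrix). -/
def jordanShift (F : Type*) [Semiring F] (k : ℕ) : Matrix (Fin k) (Fin k) F :=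
  fun i j => if (j : ℕ) = (i : ℕ) + 1 then 1 else 0

/-- The companion matrix of a monic polynomial `p`. -/
def companionMatrix {F : Type*} [Field F] (p : Polynomial F) :
    Matrix (Fin p.natDegree) (Fin p.natDegree) F :=
  fun i j => (if (i : ℕ) = (j : ℕ) + 1 then 1 else 0)
    + (if (j : ℕ) = p.natDegree - 1 then -p.coeff (i : ℕ) else 0)

/-- The generalized Jordan block `J(p, n) = id_n ⊗ x_p + N_n ⊗ id_d`. -/
noncomputable def genJordan {F : Type*} [Field F] (p : Polynomial F) (n : ℕ) :
    Matrix (Fin n × Fin p.natDegree) (Fin n × Fin p.natDegree) F :=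
  (1 : Matrix (Fin n) (Fin n) F) ⊗ₖ companionMatrix p
    + jordanShift F n ⊗ₖ (1 : Matrix (Fin p.natDegree) (Fin p.natDegree) F)

/-- The linear map `Δ ↦ Δ A - B Δ` on rectangular matrices. -/
noncomputable def sylvesterMap {F : Type*} [CommRing F] {ι κ : Type*} [Fintype ι] [Fintype κ]
    (A : Matrix ι ι F) (B : Matrix κ κ F) :
    Matrix κ ι F →ₗ[F] Matrix κ ι F where
  toFun Δ := Δ * A - B * Δ
  map_add' x y := by simp [Matrix.add_mul, Matrix.mul_add]; abel
  map_smul' c x := by simp [Matrix.smul_mul, Matrix.mul_smul, smul_sub]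

namespace GenJordanAux

open Polynomial

variable {F : Type*} [Field F] (p : Polynomial F)

theorem companion_apply (i j : Fin p.natDegree) :
    companionMatrix p i j = (if (i : ℕ) = (j : ℕ) + 1 then 1 else 0)
      + (if (j : ℕ) = p.natDegree - 1 then -p.coeff (i : ℕ) else 0) := rfl

theorem dpos (hpm : p.Monic) (hpi : Irreducible p) : 0 < p.natDegree := by
  rcases Nat.eq_zero_or_pos p.natDegree with h | h
  · exact absurd ((hpm.natDegree_eq_zero.mp h).symm ▸ isUnit_one) hpi.not_isUnit
  · exact h

variable {p}

/-- helper: sum over `Fin k` with indicator on the left. -/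
theorem sum_pick_left {k : ℕ} (t : ℕ) (ht : t < k) (f : Fin k → F) :
    (∑ b : Fin k, (if (b : ℕ) = t then (1:F) else 0) * f b) = f ⟨t, ht⟩ := by
  rw [Finset.sum_eq_single (⟨t, ht⟩ : Fin k)]
  · simp
  · intro b _ hb
    rw [if_neg, zero_mul]
    exact fun h => hb (Fin.ext h)
  · intro h; exact absurd (Finset.mem_univ _) h

theorem sum_pick_right {k : ℕ} (t : ℕ) (ht : t < k) (f : Fin k → F) :
    (∑ b : Fin k, f b * (if (b : ℕ) = t then (1:F) else 0)) = f ⟨t, ht⟩ := by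
  rw [Finset.sum_eq_single (⟨t, ht⟩ : Fin k)]
  · simp
  · intro b _ hb
    rw [if_neg, mul_zero]
    exact fun h => hb (Fin.ext h)
  · intro h; exact absurd (Finset.mem_univ _) h

theorem sum_pick_none {k : ℕ} (t : ℕ) (ht : k ≤ t) (f : Fin k → F) :
    (∑ b : Fin k, (if (b : ℕ) = t then (1:F) else 0) * f b) = 0 := by
  apply Finset.sum_eq_zero
  intro b _
  rw [if_neg, zero_mul]
  omega

theorem sum_mulVecAux {k : ℕ} {ι : Type*} (s : Finset ι)
    (f : ι → Matrix (Fin k) (Fin k) F) (v : Fin k → F) :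
    (∑ i ∈ s, f i) *ᵥ v = ∑ i ∈ s, f i *ᵥ v := by
  ext a
  simp [Matrix.mulVec, dotProduct, Finset.sum_apply, Matrix.sum_apply,
    Finset.sum_mul]
  rw [Finset.sum_comm]

end GenJordanAux

namespace GenJordanAux

open Polynomial

variable {F : Type*} [Field F] {p : Polynomial F}

theorem pow_mulVec_e0 (hd : 0 < p.natDegree) (j : ℕ) (hj : j < p.natDegree) :
    (companionMatrix p) ^ j *ᵥ Pi.single (⟨0, hd⟩ : Fin p.natDegree) (1:F)
      = Pi.single ⟨j, hj⟩ 1 := by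
  induction j with
  | zero => rw [pow_zero, one_mulVec]
  | succ j ih =>
    have hj' : j < p.natDegree := lt_trans (Nat.lt_succ_self j) hj
    rw [pow_succ', ← mulVec_mulVec, ih hj', mulVec_single]
    funext i
    show companionMatrix p i _ * 1 = _
    rw [companion_apply, Pi.single_apply]
    have : ((⟨j, hj'⟩ : Fin p.natDegree) : ℕ) ≠ p.natDegree - 1 := by
      simp only []
      omega
    rw [if_neg this, add_zero]
    by_cases hij : (i : ℕ) = j + 1
    · rw [if_pos hij, if_pos (Fin.ext hij), mul_one]
    · rw [if_neg hij, if_neg fun h => hij (by rw [h]), zero_mul]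

theorem mulVec_etop (hd : 0 < p.natDegree) :
    companionMatrix p *ᵥ Pi.single (⟨p.natDegree - 1, by omega⟩ : Fin p.natDegree) (1:F)
      = fun i : Fin p.natDegree => -p.coeff (i : ℕ) := by
  funext i
  rw [mulVec_single]
  show companionMatrix p i _ * 1 = _
  rw [companion_apply, mul_one]
  have h1 : ¬ ((i:ℕ) = ((⟨p.natDegree - 1, by omega⟩ : Fin p.natDegree) : ℕ) + 1) := by
    have := i.isLt; simp only []; omega
  rw [if_neg h1, if_pos rfl, zero_add]

theorem companion_cayley (hpm : p.Monic) (hd : 0 < p.natDegree) :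
    (companionMatrix p) ^ p.natDegree
      + ∑ b : Fin p.natDegree, p.coeff (b : ℕ) • (companionMatrix p) ^ (b : ℕ) = 0 := by
  set C := companionMatrix p with hC
  set M := C ^ p.natDegree + ∑ b : Fin p.natDegree, p.coeff (b:ℕ) • C ^ (b:ℕ) with hM
  have hcomm : ∀ j : ℕ, M * C ^ j = C ^ j * M := by
    intro j
    have h1 : Commute M (C ^ j) := by
      apply Commute.add_left
      · exact (Commute.refl C).pow_pow _ _
      · apply Commute.sum_left
        intro b _
        exact ((Commute.refl C).pow_pow _ _).smul_left _
    exact h1.eq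
  have key0 : M *ᵥ Pi.single (⟨0, hd⟩ : Fin p.natDegree) (1:F) = 0 := by
    rw [hM, add_mulVec, sum_mulVecAux]
    have h1 : C ^ p.natDegree *ᵥ Pi.single (⟨0, hd⟩ : Fin p.natDegree) (1:F)
        = fun i : Fin p.natDegree => -p.coeff (i:ℕ) := by
      have hsplit : p.natDegree = (p.natDegree - 1) + 1 := by omega
      have hpow : C ^ p.natDegree = C * C ^ (p.natDegree - 1) := by
        rw [← pow_succ']
        congr 1
      rw [hpow, ← mulVec_mulVec,
        pow_mulVec_e0 hd (p.natDegree - 1) (by omega), mulVec_etop hd]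
    rw [h1]
    funext i
    simp only [Pi.add_apply, Finset.sum_apply, Pi.smul_apply, smul_mulVec,
      Pi.zero_apply]
    have h2 : ∀ b : Fin p.natDegree,
        p.coeff (b:ℕ) • (C ^ (b:ℕ) *ᵥ Pi.single (⟨0, hd⟩ : Fin p.natDegree) (1:F)) i
          = if i = b then p.coeff (b:ℕ) else 0 := by
      intro b
      have hbe : (⟨(b:ℕ), b.isLt⟩ : Fin p.natDegree) = b := Fin.eta b b.isLt
      rw [pow_mulVec_e0 hd (b:ℕ) b.isLt, hbe]
      simp only [Pi.smul_apply, smul_eq_mul, Pi.single_apply]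
      by_cases h : i = b
      · rw [if_pos h, if_pos h, mul_one]
      · rw [if_neg h, if_neg h, mul_zero]
    rw [Finset.sum_congr rfl (fun b _ => h2 b)]
    rw [Finset.sum_ite_eq (Finset.univ : Finset (Fin p.natDegree)) i
      (fun b => p.coeff (b:ℕ))]
    simp
  have cols : ∀ j : Fin p.natDegree, M *ᵥ Pi.single j (1:F) = 0 := by
    intro j
    have : Pi.single j (1:F) = C ^ (j:ℕ) *ᵥ Pi.single (⟨0, hd⟩ : Fin p.natDegree) (1:F) := by
      rw [pow_mulVec_e0 hd (j:ℕ) j.isLt]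
    rw [this, mulVec_mulVec, hcomm, ← mulVec_mulVec, key0, mulVec_zero]
  ext i j
  have := congrFun (cols j) i
  rw [mulVec_single] at this
  simpa using this

/-- The matrix commuting with `C` whose `b`-th column is `C^b v`. -/
def polyMat (p : Polynomial F) (v : Fin p.natDegree → F) :
    Matrix (Fin p.natDegree) (Fin p.natDegree) F :=
  Matrix.of fun a b => ((companionMatrix p) ^ (b : ℕ) *ᵥ v) a

theorem cayley_mulVec (hpm : p.Monic) (hd : 0 < p.natDegree) (v : Fin p.natDegree → F) :
    (companionMatrix p) ^ p.natDegree *ᵥ v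
      = - ∑ b : Fin p.natDegree, p.coeff (b:ℕ) • ((companionMatrix p) ^ (b:ℕ) *ᵥ v) := by
  have h := companion_cayley hpm hd
  have h2 : (companionMatrix p) ^ p.natDegree
      = - ∑ b : Fin p.natDegree, p.coeff (b:ℕ) • (companionMatrix p) ^ (b:ℕ) := by
    rw [← sub_eq_zero]; rw [sub_neg_eq_add]; exact h
  rw [h2, neg_mulVec, sum_mulVecAux]
  congr 1
  apply Finset.sum_congr rfl
  intro b _
  rw [smul_mulVec]

theorem polyMat_comm (hpm : p.Monic) (hd : 0 < p.natDegree) (v : Fin p.natDegree → F) :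
    polyMat p v * companionMatrix p = companionMatrix p * polyMat p v := by
  ext a j
  rw [Matrix.mul_apply, Matrix.mul_apply]
  have hRHS : ∑ b, companionMatrix p a b * polyMat p v b j
      = ((companionMatrix p) ^ ((j:ℕ)+1) *ᵥ v) a := by
    rw [pow_succ']
    rw [← mulVec_mulVec]
    rw [Matrix.mulVec]
    rfl
  rw [hRHS]
  by_cases hj : (j : ℕ) = p.natDegree - 1
  · have hbne : ∀ b : Fin p.natDegree, ¬ ((b:ℕ) = (j:ℕ) + 1) := by
      intro b; have := b.isLt; omega
    have hsum : ∀ b : Fin p.natDegree, polyMat p v a b * companionMatrix p b j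
        = -(p.coeff (b:ℕ) • ((companionMatrix p) ^ (b:ℕ) *ᵥ v)) a := by
      intro b
      rw [companion_apply, if_neg (hbne b), if_pos hj, zero_add]
      simp only [polyMat, Matrix.of_apply, Pi.neg_apply, Pi.smul_apply, smul_eq_mul]
      ring
    rw [Finset.sum_congr rfl fun b _ => hsum b]
    have hj1 : (j:ℕ) + 1 = p.natDegree := by have := j.isLt; omega
    rw [hj1, cayley_mulVec hpm hd]
    simp [Finset.sum_apply]
  · have hsum : ∀ b : Fin p.natDegree, polyMat p v a b * companionMatrix p b j
        = ((companionMatrix p) ^ (b:ℕ) *ᵥ v) a * (if (b:ℕ) = (j:ℕ)+1 then 1 else 0) := by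
      intro b
      rw [companion_apply, if_neg hj, add_zero]
      rfl
    rw [Finset.sum_congr rfl fun b _ => hsum b]
    have hjlt : (j:ℕ) + 1 < p.natDegree := by have := j.isLt; omega
    rw [sum_pick_right ((j:ℕ)+1) hjlt (fun b => ((companionMatrix p) ^ (b:ℕ) *ᵥ v) a)]

theorem eq_polyMat (hd : 0 < p.natDegree) {M : Matrix (Fin p.natDegree) (Fin p.natDegree) F}
    (h : M * companionMatrix p = companionMatrix p * M) :
    M = polyMat p (fun a => M a ⟨0, hd⟩) := by
  have hpow : ∀ j : ℕ, M * (companionMatrix p) ^ j = (companionMatrix p) ^ j * M :=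
    fun j => ((show Commute M (companionMatrix p) from h).pow_right j).eq
  ext a b
  have h1 : (fun a => M a b) = M *ᵥ Pi.single b (1:F) := by
    funext a'; rw [mulVec_single]; exact (mul_one _).symm
  have h2 : M *ᵥ Pi.single b (1:F)
      = (companionMatrix p) ^ (b:ℕ) *ᵥ (fun a => M a ⟨0, hd⟩) := by
    have hb : Pi.single b (1:F)
        = (companionMatrix p) ^ (b:ℕ) *ᵥ Pi.single (⟨0, hd⟩ : Fin p.natDegree) (1:F) := by
      rw [pow_mulVec_e0 hd (b:ℕ) b.isLt]
    rw [hb, mulVec_mulVec, hpow, ← mulVec_mulVec]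
    simp [mulVec_single]
    rfl
  have := congrFun (h1.trans h2) a
  simpa [polyMat] using this

end GenJordanAux

namespace GenJordanAux

open Polynomial

variable {F : Type*} [Field F] {p : Polynomial F}

theorem leftMulMatrix_eq_companion (hpm : p.Monic) (hpi : Irreducible p) :
    haveI : Fact (Irreducible p) := ⟨hpi⟩
    Algebra.leftMulMatrix (AdjoinRoot.powerBasis hpm.ne_zero).basis (AdjoinRoot.root p)
      = companionMatrix p := by
  haveI : Fact (Irreducible p) := ⟨hpi⟩
  have hd : 0 < p.natDegree := dpos p hpm hpi
  set pb := AdjoinRoot.powerBasis hpm.ne_zero with hpb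
  ext i j
  have hi : (i:ℕ) < p.natDegree := i.isLt
  have hjlt : (j:ℕ) < p.natDegree := j.isLt
  rw [Algebra.leftMulMatrix_eq_repr_mul]
  show _ = (if (i : ℕ) = (j : ℕ) + 1 then (1:F) else 0)
    + (if (j : ℕ) = p.natDegree - 1 then -p.coeff (i : ℕ) else 0)
  have hbj : pb.basis j = AdjoinRoot.root p ^ (j : ℕ) := by
    rw [pb.basis_eq_pow]
    rfl
  rw [hbj, ← pow_succ']
  by_cases hj : (j : ℕ) = p.natDegree - 1
  · have hne : ¬ ((i : ℕ) = (j : ℕ) + 1) := by omega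
    rw [if_neg hne, if_pos hj, zero_add]
    have hj1 : (j : ℕ) + 1 = p.natDegree := by omega
    rw [hj1]
    have hroot : (Polynomial.aeval (AdjoinRoot.root p)) p = 0 := by
      rw [AdjoinRoot.aeval_eq, AdjoinRoot.mk_self]
    rw [Polynomial.aeval_eq_sum_range, Finset.sum_range_succ, hpm.coeff_natDegree,
      one_smul] at hroot
    have hpow : AdjoinRoot.root p ^ p.natDegree
        = - ∑ i ∈ Finset.range p.natDegree, p.coeff i • AdjoinRoot.root p ^ i := by
      rw [eq_neg_iff_add_eq_zero, add_comm]
      exact hroot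
    rw [hpow, map_neg]
    have hsum : (∑ i ∈ Finset.range p.natDegree, p.coeff i • AdjoinRoot.root p ^ i)
        = ∑ b : Fin p.natDegree, p.coeff (b:ℕ) • pb.basis b := by
      rw [← Fin.sum_univ_eq_sum_range (fun i => p.coeff i • AdjoinRoot.root p ^ i)]
      apply Finset.sum_congr rfl
      intro b _
      congr 1
      exact (pb.basis_eq_pow b).symm
    rw [hsum, map_sum]
    simp only [Finsupp.coe_neg, Finsupp.coe_finset_sum, Pi.neg_apply, Finset.sum_apply]
    have hterm : ∀ b : Fin p.natDegree,
        ((pb.basis.repr) (p.coeff (b:ℕ) • pb.basis b)) i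
          = if (b:ℕ) = (i:ℕ) then p.coeff (b:ℕ) else 0 := by
      change ∀ b : Fin (AdjoinRoot.powerBasis hpm.ne_zero).dim,
        ((pb.basis.repr) (p.coeff (b:ℕ) • pb.basis b)) i
          = if (b:ℕ) = (i:ℕ) then p.coeff (b:ℕ) else 0
      intro b
      rw [_root_.map_smul, pb.basis.repr_self]
      rw [Finsupp.smul_single, Finsupp.single_apply]
      by_cases hbi : (b:ℕ) = (i:ℕ)
      · rw [if_pos (Fin.ext hbi), if_pos hbi, smul_eq_mul, mul_one]
      · rw [if_neg (fun h => hbi (congrArg Fin.val h)), if_neg hbi]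
    rw [Finset.sum_congr rfl (fun b _ => hterm b)]
    rw [Finset.sum_eq_single (⟨(i:ℕ), hi⟩ : Fin p.natDegree)]
    · simp
    · intro b _ hb
      rw [if_neg]
      exact fun h => hb (Fin.ext h)
    · intro h
      exact absurd (Finset.mem_univ _) h
  · have hj1 : (j : ℕ) + 1 < p.natDegree := by omega
    have hb1 : AdjoinRoot.root p ^ ((j:ℕ)+1) = pb.basis ⟨(j:ℕ)+1, hj1⟩ := by
      rw [pb.basis_eq_pow]
      rfl
    rw [hb1, pb.basis.repr_self, if_neg hj, add_zero]
    rw [Finsupp.single_apply]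
    by_cases h : (i:ℕ) = (j:ℕ)+1
    · rw [if_pos h]
      exact if_pos (Fin.ext h.symm : (⟨(j:ℕ)+1, hj1⟩ : Fin p.natDegree) = i)
    · rw [if_neg (fun hh => h (by rw [← hh])), if_neg h]

end GenJordanAux

namespace GenJordanAux

open Polynomial

variable {F : Type*} [Field F] {p : Polynomial F}

theorem comm_commutator_eq_zero [CharZero F] (hpm : p.Monic) (hpi : Irreducible p)
    {W Y : Matrix (Fin p.natDegree) (Fin p.natDegree) F}
    (hW : W * companionMatrix p = companionMatrix p * W)
    (hWY : W = companionMatrix p * Y - Y * companionMatrix p) : W = 0 := by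
  have hd : 0 < p.natDegree := dpos p hpm hpi
  haveI : Fact (Irreducible p) := ⟨hpi⟩
  set K := AdjoinRoot p with hK
  set pb := AdjoinRoot.powerBasis hpm.ne_zero with hpb
  haveI : FiniteDimensional F K := pb.finite
  set C := companionMatrix p with hCdef
  have hC : Algebra.leftMulMatrix pb.basis (AdjoinRoot.root p) = C :=
    leftMulMatrix_eq_companion hpm hpi
  set v : Fin p.natDegree → F := fun a => W a ⟨0, hd⟩ with hv
  set qv : Polynomial F := ∑ b : Fin p.natDegree, Polynomial.C (v b) * Polynomial.X ^ (b:ℕ)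
    with hqv
  have haq : Polynomial.aeval C qv = ∑ b : Fin p.natDegree, v b • C ^ (b:ℕ) := by
    rw [hqv, map_sum]
    apply Finset.sum_congr rfl
    intro b _
    rw [_root_.map_mul, Polynomial.aeval_C, _root_.map_pow, Polynomial.aeval_X, Algebra.smul_def]
  have hMcomm : Polynomial.aeval C qv * C = C * Polynomial.aeval C qv := by
    have : Commute (Polynomial.aeval C qv) C := by
      rw [haq]
      apply Commute.sum_left
      intro b _
      exact ((Commute.refl C).pow_left (b:ℕ)).smul_left (v b)
    exact this.eq
  have hMcol : ∀ a, (Polynomial.aeval C qv) a ⟨0, hd⟩ = v a := by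
    intro a
    rw [haq, Matrix.sum_apply]
    have h2 : ∀ b : Fin p.natDegree,
        (v b • C ^ (b:ℕ)) a ⟨0, hd⟩ = if a = b then v b else 0 := by
      intro b
      rw [Matrix.smul_apply, smul_eq_mul]
      have hcol : (C ^ (b:ℕ)) a ⟨0, hd⟩ = (Pi.single b (1:F) : Fin p.natDegree → F) a := by
        have h3 := congrFun (pow_mulVec_e0 hd (b:ℕ) b.isLt) a
        rw [mulVec_single] at h3
        change (C ^ (b:ℕ)) a ⟨0, hd⟩ * 1 = _ at h3
        simp only [mul_one] at h3
        rw [h3, Fin.eta]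
      rw [hcol, Pi.single_apply]
      by_cases h : a = b
      · rw [if_pos h, if_pos h, mul_one]
      · rw [if_neg h, if_neg h, mul_zero]
    rw [Finset.sum_congr rfl (fun b _ => h2 b), Finset.sum_ite_eq Finset.univ a v]
    simp
  have hWq : W = Polynomial.aeval C qv := by
    have e1 := eq_polyMat hd hW
    have e2 := eq_polyMat hd hMcomm
    rw [e2, funext hMcol] at *
    exact e1
  have htr0 : ∀ jn : ℕ, Matrix.trace (W * C ^ jn) = 0 := by
    intro jn
    rw [hWY, Matrix.sub_mul, Matrix.trace_sub, Matrix.mul_assoc,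
      Matrix.trace_mul_comm C (Y * C ^ jn), Matrix.mul_assoc, Matrix.mul_assoc,
      ← pow_succ, ← pow_succ']
    exact sub_self _
  have hAlg : ∀ q : Polynomial F, Polynomial.aeval C q
      = Algebra.leftMulMatrix pb.basis (Polynomial.aeval (AdjoinRoot.root p) q) := by
    intro q
    rw [← hC]
    exact Polynomial.aeval_algHom_apply (Algebra.leftMulMatrix pb.basis)
      (AdjoinRoot.root p) q
  set β := Polynomial.aeval (AdjoinRoot.root p) qv with hβdef
  have hβtr : ∀ jn : ℕ, Algebra.trace F K (β * AdjoinRoot.root p ^ jn) = 0 := by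
    intro jn
    have h1 : W * C ^ jn = Polynomial.aeval C (qv * Polynomial.X ^ jn) := by
      rw [_root_.map_mul, _root_.map_pow, Polynomial.aeval_X, hWq]
    have h2 := htr0 jn
    rw [h1, hAlg] at h2
    have h3 : Polynomial.aeval (AdjoinRoot.root p) (qv * Polynomial.X ^ jn)
        = β * AdjoinRoot.root p ^ jn := by
      rw [_root_.map_mul, _root_.map_pow, Polynomial.aeval_X]
    rw [h3] at h2
    rw [Algebra.trace_eq_matrix_trace pb.basis]
    exact h2
  have hβ : β = 0 := by
    apply (traceForm_nondegenerate F K).1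
    intro y
    have hform : (Algebra.traceForm F K) β = 0 := by
      apply pb.basis.ext
      intro i
      rw [Algebra.traceForm_apply, pb.basis_eq_pow, LinearMap.zero_apply]
      exact hβtr (i:ℕ)
    rw [hform, LinearMap.zero_apply]
  rw [hWq, hAlg qv, ← hβdef, hβ, map_zero]
  rfl

end GenJordanAux

namespace GenJordanAux

open Polynomial

variable {F : Type*} [Field F] {p : Polynomial F} {m n : ℕ}

theorem jordanShift_apply (k : ℕ) (i j : Fin k) :
    jordanShift F k i j = if (j : ℕ) = (i : ℕ) + 1 then 1 else 0 := rfl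

theorem mul_oneKron (Δ : Matrix (Fin n × Fin p.natDegree) (Fin m × Fin p.natDegree) F)
    (i : Fin n) (a : Fin p.natDegree) (j : Fin m) (b : Fin p.natDegree) :
    (Δ * ((1 : Matrix (Fin m) (Fin m) F) ⊗ₖ companionMatrix p)) (i,a) (j,b)
      = ∑ b' : Fin p.natDegree, Δ (i,a) (j,b') * companionMatrix p b' b := by
  rw [Matrix.mul_apply, Fintype.sum_prod_type]
  rw [Finset.sum_eq_single j]
  · apply Finset.sum_congr rfl
    intro b' _
    rw [Matrix.kroneckerMap_apply, Matrix.one_apply_eq, one_mul]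
  · intro j' _ hj'
    apply Finset.sum_eq_zero
    intro b' _
    rw [Matrix.kroneckerMap_apply, Matrix.one_apply_ne hj', zero_mul, mul_zero]
  · intro h; exact absurd (Finset.mem_univ _) h

theorem oneKron_mul (Δ : Matrix (Fin n × Fin p.natDegree) (Fin m × Fin p.natDegree) F)
    (i : Fin n) (a : Fin p.natDegree) (j : Fin m) (b : Fin p.natDegree) :
    (((1 : Matrix (Fin n) (Fin n) F) ⊗ₖ companionMatrix p) * Δ) (i,a) (j,b)
      = ∑ a' : Fin p.natDegree, companionMatrix p a a' * Δ (i,a') (j,b) := by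
  rw [Matrix.mul_apply, Fintype.sum_prod_type]
  rw [Finset.sum_eq_single i]
  · apply Finset.sum_congr rfl
    intro a' _
    rw [Matrix.kroneckerMap_apply, Matrix.one_apply_eq, one_mul]
  · intro i' _ hi'
    apply Finset.sum_eq_zero
    intro a' _
    rw [Matrix.kroneckerMap_apply, Matrix.one_apply_ne' hi', zero_mul, zero_mul]
  · intro h; exact absurd (Finset.mem_univ _) h

theorem mul_shiftKron (Δ : Matrix (Fin n × Fin p.natDegree) (Fin m × Fin p.natDegree) F)
    (i : Fin n) (a : Fin p.natDegree) (j : Fin m) (b : Fin p.natDegree) :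
    (Δ * (jordanShift F m ⊗ₖ (1 : Matrix (Fin p.natDegree) (Fin p.natDegree) F))) (i,a) (j,b)
      = if h : 0 < (j : ℕ) then Δ (i,a) (⟨(j:ℕ) - 1, by have := j.isLt; omega⟩, b) else 0 := by
  rw [Matrix.mul_apply, Fintype.sum_prod_type]
  by_cases h : 0 < (j : ℕ)
  · rw [dif_pos h]
    rw [Finset.sum_eq_single (⟨(j:ℕ) - 1, by have := j.isLt; omega⟩ : Fin m)]
    · rw [Finset.sum_eq_single b]
      · rw [Matrix.kroneckerMap_apply, jordanShift_apply, Matrix.one_apply_eq]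
        rw [if_pos (by simp; omega), mul_one, mul_one]
      · intro b' _ hb'
        rw [Matrix.kroneckerMap_apply, Matrix.one_apply_ne hb', mul_zero, mul_zero]
      · intro hh; exact absurd (Finset.mem_univ _) hh
    · intro j' _ hj'
      apply Finset.sum_eq_zero
      intro b' _
      rw [Matrix.kroneckerMap_apply, jordanShift_apply, if_neg, zero_mul, mul_zero]
      intro hc
      have hc' : (j:ℕ) = (j':ℕ) + 1 := hc
      apply hj'
      apply Fin.ext
      show (j':ℕ) = (j:ℕ) - 1
      omega
    · intro hh; exact absurd (Finset.mem_univ _) hh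
  · rw [dif_neg h]
    apply Finset.sum_eq_zero
    intro j' _
    apply Finset.sum_eq_zero
    intro b' _
    rw [Matrix.kroneckerMap_apply, jordanShift_apply,
      if_neg (show ¬((j:ℕ) = (j':ℕ) + 1) by omega), zero_mul, mul_zero]

theorem shiftKron_mul (Δ : Matrix (Fin n × Fin p.natDegree) (Fin m × Fin p.natDegree) F)
    (i : Fin n) (a : Fin p.natDegree) (j : Fin m) (b : Fin p.natDegree) :
    ((jordanShift F n ⊗ₖ (1 : Matrix (Fin p.natDegree) (Fin p.natDegree) F)) * Δ) (i,a) (j,b)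
      = if h : (i : ℕ) + 1 < n then Δ (⟨(i:ℕ) + 1, h⟩, a) (j, b) else 0 := by
  rw [Matrix.mul_apply, Fintype.sum_prod_type]
  by_cases h : (i : ℕ) + 1 < n
  · rw [dif_pos h]
    rw [Finset.sum_eq_single (⟨(i:ℕ) + 1, h⟩ : Fin n)]
    · rw [Finset.sum_eq_single a]
      · rw [Matrix.kroneckerMap_apply, jordanShift_apply, Matrix.one_apply_eq]
        rw [if_pos (by simp), mul_one, one_mul]
      · intro a' _ ha'
        rw [Matrix.kroneckerMap_apply, Matrix.one_apply_ne' ha', mul_zero, zero_mul]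
      · intro hh; exact absurd (Finset.mem_univ _) hh
    · intro i' _ hi'
      apply Finset.sum_eq_zero
      intro a' _
      rw [Matrix.kroneckerMap_apply, jordanShift_apply, if_neg, zero_mul, zero_mul]
      intro hc
      apply hi'
      exact Fin.ext hc
    · intro hh; exact absurd (Finset.mem_univ _) hh
  · rw [dif_neg h]
    apply Finset.sum_eq_zero
    intro i' _
    apply Finset.sum_eq_zero
    intro a' _
    rw [Matrix.kroneckerMap_apply, jordanShift_apply,
      if_neg (show ¬((i':ℕ) = (i:ℕ) + 1) by have := i'.isLt; omega), zero_mul, zero_mul]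

end GenJordanAux

namespace GenJordanAux

open Polynomial

variable {F : Type*} [Field F] {p : Polynomial F} {m n : ℕ}

theorem hard_direction [CharZero F] (hpm : p.Monic) (hpi : Irreducible p)
    (Δ : Matrix (Fin n × Fin p.natDegree) (Fin m × Fin p.natDegree) F)
    (hJ : Δ * genJordan p m = genJordan p n * Δ) :
    Δ * ((1 : Matrix (Fin m) (Fin m) F) ⊗ₖ companionMatrix p)
        = ((1 : Matrix (Fin n) (Fin n) F) ⊗ₖ companionMatrix p) * Δ ∧
      Δ * (jordanShift F m ⊗ₖ (1 : Matrix (Fin p.natDegree) (Fin p.natDegree) F))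
        = (jordanShift F n ⊗ₖ (1 : Matrix (Fin p.natDegree) (Fin p.natDegree) F)) * Δ := by
  set C := companionMatrix p with hCdef
  set eB : ℕ → ℕ → Matrix (Fin p.natDegree) (Fin p.natDegree) F := fun i j =>
    if h : i < n ∧ j < m then Matrix.of (fun a b => Δ (⟨i, h.1⟩, a) (⟨j, h.2⟩, b)) else 0
    with heB
  have hJe : ∀ (i : Fin n) (a : Fin p.natDegree) (j : Fin m) (b : Fin p.natDegree),
      (∑ b', Δ (i,a) (j,b') * C b' b)
        + (if h : 0 < (j:ℕ) then Δ (i,a) (⟨(j:ℕ)-1, by have := j.isLt; omega⟩, b) else 0)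
      = (∑ a', C a a' * Δ (i,a') (j,b))
        + (if h : (i:ℕ)+1 < n then Δ (⟨(i:ℕ)+1, h⟩, a) (j,b) else 0) := by
    intro i a j b
    have h0 := congrFun (congrFun hJ (i,a)) (j,b)
    rw [genJordan, genJordan, Matrix.mul_add, Matrix.add_mul, Matrix.add_apply,
      Matrix.add_apply, mul_oneKron, mul_shiftKron, oneKron_mul, shiftKron_mul] at h0
    exact h0
  have R : ∀ i j : ℕ, j < m →
      C * eB i j - eB i j * C
        = (if 0 < j then eB i (j-1) else 0) - eB (i+1) j := by
    intro i j hjm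
    by_cases hi : i < n
    · have hext : eB i j = Matrix.of (fun a b => Δ (⟨i, hi⟩, a) (⟨j, hjm⟩, b)) :=
        dif_pos ⟨hi, hjm⟩
      ext a b
      rw [Matrix.sub_apply, Matrix.sub_apply, hext, Matrix.mul_apply, Matrix.mul_apply]
      simp only [Matrix.of_apply]
      have key := hJe ⟨i, hi⟩ a ⟨j, hjm⟩ b
      have hP : (if 0 < j then eB i (j-1) else 0) a b
          = (if h : 0 < ((⟨j, hjm⟩ : Fin m):ℕ) then
              Δ (⟨i, hi⟩,a) (⟨((⟨j, hjm⟩ : Fin m):ℕ)-1,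
                by have := (⟨j, hjm⟩ : Fin m).isLt; omega⟩, b) else 0) := by
        by_cases hj0 : 0 < j
        · rw [if_pos hj0, dif_pos (show 0 < ((⟨j, hjm⟩ : Fin m):ℕ) from hj0)]
          rw [show eB i (j-1) = Matrix.of (fun a b => Δ (⟨i, hi⟩, a) (⟨j-1, by omega⟩, b))
            from dif_pos ⟨hi, by omega⟩]
          rfl
        · rw [if_neg hj0, dif_neg (show ¬ (0 < ((⟨j, hjm⟩ : Fin m):ℕ)) from hj0)]
          rfl
      have hQ : (eB (i+1) j) a b
          = (if h : ((⟨i, hi⟩ : Fin n):ℕ)+1 < n then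
              Δ (⟨((⟨i, hi⟩ : Fin n):ℕ)+1, h⟩, a) (⟨j, hjm⟩, b) else 0) := by
        by_cases hi1 : i+1 < n
        · rw [dif_pos (show ((⟨i, hi⟩ : Fin n):ℕ)+1 < n from hi1)]
          rw [show eB (i+1) j = Matrix.of (fun a b => Δ (⟨i+1, hi1⟩, a) (⟨j, hjm⟩, b))
            from dif_pos ⟨hi1, hjm⟩]
          rfl
        · rw [dif_neg (show ¬ (((⟨i, hi⟩ : Fin n):ℕ)+1 < n) from hi1)]
          rw [show eB (i+1) j = 0 from dif_neg (by omega)]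
          rfl
      rw [hP, hQ]
      linear_combination - key
    · have h0 : eB i j = 0 := dif_neg (by omega)
      have h1 : eB i (j-1) = 0 := dif_neg (by omega)
      have h2 : eB (i+1) j = 0 := dif_neg (by omega)
      rw [h0, h1, h2]
      simp
  have Dzero : ∀ k i j, j < m → n - i + j ≤ k →
      (if 0 < j then eB i (j-1) else 0) - eB (i+1) j = 0 := by
    intro k
    induction k using Nat.strong_induction_on with
    | _ k IH =>
      intro i j hjm hk
      by_cases hi : i < n
      · have hR := R i j hjm
        have hW : ((if 0 < j then eB i (j-1) else 0) - eB (i+1) j) * C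
            = C * ((if 0 < j then eB i (j-1) else 0) - eB (i+1) j) := by
          have hPz : C * (if 0 < j then eB i (j-1) else 0)
              - (if 0 < j then eB i (j-1) else 0) * C = 0 := by
            by_cases hj0 : 0 < j
            · rw [if_pos hj0, R i (j-1) (by omega),
                IH (n - i + (j-1)) (by omega) i (j-1) (by omega) (le_refl _)]
            · rw [if_neg hj0]
              simp
          have hQz : C * eB (i+1) j - eB (i+1) j * C = 0 := by
            rw [R (i+1) j hjm, IH (n - (i+1) + j) (by omega) (i+1) j hjm (le_refl _)]
          have expand : C * ((if 0 < j then eB i (j-1) else 0) - eB (i+1) j)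
              - ((if 0 < j then eB i (j-1) else 0) - eB (i+1) j) * C
              = (C * (if 0 < j then eB i (j-1) else 0)
                  - (if 0 < j then eB i (j-1) else 0) * C)
                - (C * eB (i+1) j - eB (i+1) j * C) := by
            rw [Matrix.mul_sub, Matrix.sub_mul]
            abel
          have : C * ((if 0 < j then eB i (j-1) else 0) - eB (i+1) j)
              - ((if 0 < j then eB i (j-1) else 0) - eB (i+1) j) * C = 0 := by
            rw [expand, hPz, hQz, sub_zero]
          rw [← sub_eq_zero, ← neg_sub, this, neg_zero]
        exact comm_commutator_eq_zero hpm hpi hW hR.symm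
      · have h1 : eB i (j-1) = 0 := dif_neg (by omega)
        have h2 : eB (i+1) j = 0 := dif_neg (by omega)
        rw [h1, h2]
        simp
  have hDe : ∀ (i : Fin n) (j : Fin m),
      (if 0 < (j:ℕ) then eB (i:ℕ) ((j:ℕ)-1) else 0) = eB ((i:ℕ)+1) (j:ℕ) :=
    fun i j => sub_eq_zero.mp (Dzero (n - (i:ℕ) + (j:ℕ)) (i:ℕ) (j:ℕ) j.isLt (le_refl _))
  constructor
  · -- A condition
    have hCe : ∀ (i : Fin n) (j : Fin m),
        C * eB (i:ℕ) (j:ℕ) = eB (i:ℕ) (j:ℕ) * C := by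
      intro i j
      have h2 := R (i:ℕ) (j:ℕ) j.isLt
      rw [hDe i j, sub_self] at h2
      exact sub_eq_zero.mp h2
    ext x y
    obtain ⟨i, a⟩ := x
    obtain ⟨j, b⟩ := y
    rw [mul_oneKron, oneKron_mul]
    have hext : eB (i:ℕ) (j:ℕ)
        = Matrix.of (fun a b => Δ (⟨(i:ℕ), i.isLt⟩, a) (⟨(j:ℕ), j.isLt⟩, b)) :=
      dif_pos ⟨i.isLt, j.isLt⟩
    have h1 := congrFun (congrFun (hCe i j) a) b
    rw [hext, Matrix.mul_apply, Matrix.mul_apply] at h1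
    simp only [Matrix.of_apply, Fin.eta] at h1
    exact h1.symm
  · -- B condition
    ext x y
    obtain ⟨i, a⟩ := x
    obtain ⟨j, b⟩ := y
    rw [mul_shiftKron, shiftKron_mul]
    have hD := hDe i j
    by_cases hj0 : 0 < (j:ℕ)
    · rw [if_pos hj0] at hD
      have hextL : eB (i:ℕ) ((j:ℕ)-1)
          = Matrix.of (fun a b => Δ (⟨(i:ℕ), i.isLt⟩, a) (⟨(j:ℕ)-1, by have := j.isLt; omega⟩, b)) :=
        dif_pos ⟨i.isLt, by have := j.isLt; omega⟩
      rw [dif_pos hj0]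
      by_cases hi1 : (i:ℕ)+1 < n
      · rw [dif_pos hi1]
        have hextR : eB ((i:ℕ)+1) (j:ℕ)
            = Matrix.of (fun a b => Δ (⟨(i:ℕ)+1, hi1⟩, a) (⟨(j:ℕ), j.isLt⟩, b)) :=
          dif_pos ⟨hi1, j.isLt⟩
        have h1 := congrFun (congrFun (hextL.symm.trans (hD.trans hextR)) a) b
        simp only [Matrix.of_apply, Fin.eta] at h1
        exact h1
      · rw [dif_neg hi1]
        have hextR : eB ((i:ℕ)+1) (j:ℕ) = 0 := dif_neg (by omega)
        have h1 := congrFun (congrFun (hextL.symm.trans (hD.trans hextR)) a) b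
        simp only [Matrix.of_apply, Fin.eta, Matrix.zero_apply] at h1
        exact h1
    · rw [if_neg hj0] at hD
      rw [dif_neg hj0]
      by_cases hi1 : (i:ℕ)+1 < n
      · rw [dif_pos hi1]
        have hextR : eB ((i:ℕ)+1) (j:ℕ)
            = Matrix.of (fun a b => Δ (⟨(i:ℕ)+1, hi1⟩, a) (⟨(j:ℕ), j.isLt⟩, b)) :=
          dif_pos ⟨hi1, j.isLt⟩
        have h1 := congrFun (congrFun (hD.trans hextR) a) b
        simp only [Matrix.of_apply, Fin.eta, Matrix.zero_apply] at h1
        exact h1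
      · rw [dif_neg hi1]

end GenJordanAux

namespace GenJordanAux

open Polynomial

variable {F : Type*} [Field F] {p : Polynomial F} {m n : ℕ}

/-- The parametrization of intertwiners by `min m n` commutant elements
(given by their first columns). -/
noncomputable def phi (p : Polynomial F) (m n : ℕ) :
    (Fin (min m n) → Fin p.natDegree → F) →ₗ[F]
      Matrix (Fin n × Fin p.natDegree) (Fin m × Fin p.natDegree) F where
  toFun c := Matrix.of fun ia jb =>
    if h : (ia.1 : ℕ) + (m - n) ≤ (jb.1 : ℕ)
        ∧ (jb.1 : ℕ) - (ia.1 : ℕ) - (m - n) < min m n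
    then ((companionMatrix p) ^ ((jb.2 : ℕ))
        *ᵥ c ⟨(jb.1 : ℕ) - (ia.1 : ℕ) - (m - n), h.2⟩) ia.2
    else 0
  map_add' c c' := by
    ext ⟨i, a⟩ ⟨j, b⟩
    simp only [Matrix.of_apply, Matrix.add_apply]
    by_cases h : ((i:ℕ) + (m-n) ≤ (j:ℕ)) ∧ ((j:ℕ) - (i:ℕ) - (m-n) < min m n)
    · rw [dif_pos h, dif_pos h, dif_pos h]
      rw [show (c + c') ⟨(j:ℕ) - (i:ℕ) - (m-n), h.2⟩
          = c ⟨(j:ℕ) - (i:ℕ) - (m-n), h.2⟩ + c' ⟨(j:ℕ) - (i:ℕ) - (m-n), h.2⟩ from rfl]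
      rw [mulVec_add]
      rfl
    · rw [dif_neg h, dif_neg h, dif_neg h, add_zero]
  map_smul' r c := by
    ext ⟨i, a⟩ ⟨j, b⟩
    simp only [Matrix.of_apply, Matrix.smul_apply, RingHom.id_apply]
    by_cases h : ((i:ℕ) + (m-n) ≤ (j:ℕ)) ∧ ((j:ℕ) - (i:ℕ) - (m-n) < min m n)
    · rw [dif_pos h, dif_pos h]
      rw [show (r • c) ⟨(j:ℕ) - (i:ℕ) - (m-n), h.2⟩
          = r • (c ⟨(j:ℕ) - (i:ℕ) - (m-n), h.2⟩) from rfl]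
      rw [mulVec_smul]
      rfl
    · rw [dif_neg h, dif_neg h, smul_zero]

theorem phi_apply (c : Fin (min m n) → Fin p.natDegree → F) (i : Fin n)
    (a : Fin p.natDegree) (j : Fin m) (b : Fin p.natDegree) :
    phi p m n c (i, a) (j, b)
      = if h : (i : ℕ) + (m - n) ≤ (j : ℕ)
            ∧ (j : ℕ) - (i : ℕ) - (m - n) < min m n
        then ((companionMatrix p) ^ ((b : ℕ))
            *ᵥ c ⟨(j : ℕ) - (i : ℕ) - (m - n), h.2⟩) a
        else 0 := rfl

theorem min_facts (m n : ℕ) : min m n ≤ m ∧ min m n ≤ n ∧ (min m n = m ∨ min m n = n) :=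
  ⟨min_le_left _ _, min_le_right _ _, min_choice _ _⟩

theorem phi_injective (hd : 0 < p.natDegree) : Function.Injective (phi p m n) := by
  intro c c' h
  funext k a
  have hmf := min_facts m n
  have hk := k.isLt
  have hn : 0 < n := by omega
  have hmk : (m - n) + (k : ℕ) < m := by omega
  have h1 := congrFun (congrFun h ((⟨0, hn⟩ : Fin n), a))
    ((⟨(m - n) + (k : ℕ), hmk⟩ : Fin m), (⟨0, hd⟩ : Fin p.natDegree))
  rw [phi_apply, phi_apply] at h1
  have hcond : ((0:ℕ) + (m-n) ≤ (m-n) + (k:ℕ))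
      ∧ ((m-n) + (k:ℕ) - (0:ℕ) - (m-n) < min m n) := by
    constructor
    · omega
    · omega
  rw [dif_pos hcond, dif_pos hcond, pow_zero, one_mulVec, one_mulVec] at h1
  have hkk : (⟨(m-n) + (k:ℕ) - (0:ℕ) - (m-n), hcond.2⟩ : Fin (min m n)) = k :=
    Fin.ext (show (m-n) + (k:ℕ) - (0:ℕ) - (m-n) = (k:ℕ) by omega)
  rw [hkk] at h1
  exact h1

theorem blockA_comm
    (Δ : Matrix (Fin n × Fin p.natDegree) (Fin m × Fin p.natDegree) F)
    (hA : Δ * ((1 : Matrix (Fin m) (Fin m) F) ⊗ₖ companionMatrix p)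
        = ((1 : Matrix (Fin n) (Fin n) F) ⊗ₖ companionMatrix p) * Δ)
    (i : Fin n) (j : Fin m) :
    (Matrix.of fun a b => Δ (i,a) (j,b)) * companionMatrix p
      = companionMatrix p * (Matrix.of fun a b => Δ (i,a) (j,b)) := by
  ext a b
  rw [Matrix.mul_apply, Matrix.mul_apply]
  simp only [Matrix.of_apply]
  have h1 := congrFun (congrFun hA (i, a)) (j, b)
  rw [mul_oneKron, oneKron_mul] at h1
  exact h1

theorem phi_condA (hpm : p.Monic) (hpi : Irreducible p)
    (c : Fin (min m n) → Fin p.natDegree → F) :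
    phi p m n c * ((1 : Matrix (Fin m) (Fin m) F) ⊗ₖ companionMatrix p)
      = ((1 : Matrix (Fin n) (Fin n) F) ⊗ₖ companionMatrix p) * phi p m n c := by
  have hd : 0 < p.natDegree := dpos p hpm hpi
  ext ⟨i, a⟩ ⟨j, b⟩
  rw [mul_oneKron, oneKron_mul]
  by_cases h : ((i:ℕ) + (m-n) ≤ (j:ℕ)) ∧ ((j:ℕ) - (i:ℕ) - (m-n) < min m n)
  · set v := c ⟨(j:ℕ) - (i:ℕ) - (m-n), h.2⟩ with hv
    have hL : ∑ b', phi p m n c (i,a) (j,b') * companionMatrix p b' b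
        = (polyMat p v * companionMatrix p) a b := by
      rw [Matrix.mul_apply]
      apply Finset.sum_congr rfl
      intro b' _
      rw [phi_apply, dif_pos h]
      rfl
    have hR : ∑ a', companionMatrix p a a' * phi p m n c (i,a') (j,b)
        = (companionMatrix p * polyMat p v) a b := by
      rw [Matrix.mul_apply]
      apply Finset.sum_congr rfl
      intro a' _
      rw [phi_apply, dif_pos h]
      rfl
    rw [hL, hR, polyMat_comm hpm hd]
  · have hL : ∑ b', phi p m n c (i,a) (j,b') * companionMatrix p b' b = 0 := by
      apply Finset.sum_eq_zero
      intro b' _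
      rw [phi_apply, dif_neg h, zero_mul]
    have hR : ∑ a', companionMatrix p a a' * phi p m n c (i,a') (j,b) = 0 := by
      apply Finset.sum_eq_zero
      intro a' _
      rw [phi_apply, dif_neg h, mul_zero]
    rw [hL, hR]

theorem phi_condB (c : Fin (min m n) → Fin p.natDegree → F) :
    phi p m n c * (jordanShift F m ⊗ₖ (1 : Matrix (Fin p.natDegree) (Fin p.natDegree) F))
      = (jordanShift F n ⊗ₖ (1 : Matrix (Fin p.natDegree) (Fin p.natDegree) F))
          * phi p m n c := by
  have hcast : ∀ (x y : ℕ) (hx : x < min m n) (hy : y < min m n), x = y →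
      c ⟨x, hx⟩ = c ⟨y, hy⟩ := by
    intro x y hx hy hxy
    subst hxy
    rfl
  have hmf := min_facts m n
  ext ⟨i, a⟩ ⟨j, b⟩
  have hi := i.isLt
  have hj := j.isLt
  rw [mul_shiftKron, shiftKron_mul]
  by_cases hj0 : 0 < (j:ℕ)
  · rw [dif_pos hj0]
    by_cases hi1 : (i:ℕ) + 1 < n
    · rw [dif_pos hi1]
      simp only [phi_apply, Fin.val_mk]
      by_cases h : (((i:ℕ)+1) + (m-n) ≤ (j:ℕ))
          ∧ ((j:ℕ) - ((i:ℕ)+1) - (m-n) < min m n)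
      · have h' : ((i:ℕ) + (m-n) ≤ (j:ℕ) - 1)
            ∧ ((j:ℕ) - 1 - (i:ℕ) - (m-n) < min m n) := ⟨by omega, by omega⟩
        rw [dif_pos h', dif_pos h]
        have hc := hcast ((j:ℕ) - 1 - (i:ℕ) - (m-n)) ((j:ℕ) - ((i:ℕ)+1) - (m-n))
          h'.2 h.2 (by omega)
        rw [hc]
      · have h' : ¬ (((i:ℕ) + (m-n) ≤ (j:ℕ) - 1)
            ∧ ((j:ℕ) - 1 - (i:ℕ) - (m-n) < min m n)) := by omega
        rw [dif_neg h', dif_neg h]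
    · rw [dif_neg hi1]
      simp only [phi_apply, Fin.val_mk]
      have h' : ¬ (((i:ℕ) + (m-n) ≤ (j:ℕ) - 1)
          ∧ ((j:ℕ) - 1 - (i:ℕ) - (m-n) < min m n)) := by omega
      rw [dif_neg h']
  · rw [dif_neg hj0]
    by_cases hi1 : (i:ℕ) + 1 < n
    · rw [dif_pos hi1]
      simp only [phi_apply, Fin.val_mk]
      have h' : ¬ ((((i:ℕ)+1) + (m-n) ≤ (j:ℕ))
          ∧ ((j:ℕ) - ((i:ℕ)+1) - (m-n) < min m n)) := by omega
      rw [dif_neg h']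
    · rw [dif_neg hi1]

end GenJordanAux

namespace GenJordanAux

open Polynomial

variable {F : Type*} [Field F] {p : Polynomial F} {m n : ℕ}

theorem exists_phi (hpm : p.Monic) (hpi : Irreducible p)
    (Δ : Matrix (Fin n × Fin p.natDegree) (Fin m × Fin p.natDegree) F)
    (hA : Δ * ((1 : Matrix (Fin m) (Fin m) F) ⊗ₖ companionMatrix p)
        = ((1 : Matrix (Fin n) (Fin n) F) ⊗ₖ companionMatrix p) * Δ)
    (hB : Δ * (jordanShift F m ⊗ₖ (1 : Matrix (Fin p.natDegree) (Fin p.natDegree) F))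
        = (jordanShift F n ⊗ₖ (1 : Matrix (Fin p.natDegree) (Fin p.natDegree) F)) * Δ) :
    ∃ c, phi p m n c = Δ := by
  have hd : 0 < p.natDegree := dpos p hpm hpi
  have hmf := min_facts m n
  -- entrywise consequences of hB
  have hBe : ∀ (i : Fin n) (j : Fin m) (a b : Fin p.natDegree),
      (if h : 0 < (j:ℕ) then Δ (i,a) (⟨(j:ℕ) - 1, by have := j.isLt; omega⟩, b) else 0)
        = (if h : (i:ℕ) + 1 < n then Δ (⟨(i:ℕ) + 1, h⟩, a) (j, b) else 0) := by
    intro i j a b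
    have h1 := congrFun (congrFun hB (i, a)) (j, b)
    rw [mul_shiftKron, shiftKron_mul] at h1
    exact h1
  have hshift : ∀ (i i' : Fin n) (j j' : Fin m) (a b : Fin p.natDegree),
      (i':ℕ) = (i:ℕ) + 1 → (j':ℕ) = (j:ℕ) + 1 → Δ (i',a) (j',b) = Δ (i,a) (j,b) := by
    intro i i' j j' a b hii hjj
    have h1 := hBe i j' a b
    rw [dif_pos (show 0 < (j':ℕ) by omega),
      dif_pos (show (i:ℕ) + 1 < n by have := i'.isLt; omega)] at h1
    have e1 : (⟨(j':ℕ) - 1, by have := j'.isLt; omega⟩ : Fin m) = j :=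
      Fin.ext (show (j':ℕ) - 1 = (j:ℕ) by omega)
    have e2 : (⟨(i:ℕ) + 1, by have := i'.isLt; omega⟩ : Fin n) = i' :=
      Fin.ext (show (i:ℕ) + 1 = (i':ℕ) by omega)
    rw [e1, e2] at h1
    exact h1.symm
  have hzeroL : ∀ (i : Fin n) (j : Fin m) (a b : Fin p.natDegree),
      (j:ℕ) = 0 → 1 ≤ (i:ℕ) → Δ (i,a) (j,b) = 0 := by
    intro i j a b hj0 hi1
    have hilt := i.isLt
    have h1 := hBe ⟨(i:ℕ) - 1, by omega⟩ j a b
    rw [dif_neg (show ¬ (0 < (j:ℕ)) by omega),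
      dif_pos (show (i:ℕ) - 1 + 1 < n by omega)] at h1
    have e2 : (⟨(i:ℕ) - 1 + 1, show (i:ℕ) - 1 + 1 < n by omega⟩ : Fin n) = i :=
      Fin.ext (show (i:ℕ) - 1 + 1 = (i:ℕ) by omega)
    rw [e2] at h1
    exact h1.symm
  have hzeroB : ∀ (i : Fin n) (j : Fin m) (a b : Fin p.natDegree),
      (i:ℕ) = n - 1 → (j:ℕ) + 1 < m → Δ (i,a) (j,b) = 0 := by
    intro i j a b hin hjm
    have hilt := i.isLt
    have h1 := hBe i ⟨(j:ℕ) + 1, hjm⟩ a b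
    rw [dif_pos (show 0 < (j:ℕ) + 1 by omega),
      dif_neg (show ¬ ((i:ℕ) + 1 < n) by omega)] at h1
    have e1 : (⟨(j:ℕ) + 1 - 1, show (j:ℕ) + 1 - 1 < m by omega⟩ : Fin m) = j :=
      Fin.ext (show (j:ℕ) + 1 - 1 = (j:ℕ) by omega)
    rw [e1] at h1
    exact h1
  have hdiag : ∀ (s : ℕ) (i : Fin n) (j : Fin m) (a b : Fin p.natDegree)
      (his : (i:ℕ) + s < n) (hjs : (j:ℕ) + s < m),
      Δ (⟨(i:ℕ) + s, his⟩, a) (⟨(j:ℕ) + s, hjs⟩, b) = Δ (i,a) (j,b) := by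
    intro s
    induction s with
    | zero =>
      intro i j a b his hjs
      have e1 : (⟨(i:ℕ) + 0, his⟩ : Fin n) = i := Fin.ext (show (i:ℕ) + 0 = (i:ℕ) by omega)
      have e2 : (⟨(j:ℕ) + 0, hjs⟩ : Fin m) = j := Fin.ext (show (j:ℕ) + 0 = (j:ℕ) by omega)
      rw [e1, e2]
    | succ s ih =>
      intro i j a b his hjs
      have h1 : Δ (⟨(i:ℕ) + (s+1), his⟩, a) (⟨(j:ℕ) + (s+1), hjs⟩, b)
          = Δ (⟨(i:ℕ) + s, by omega⟩, a) (⟨(j:ℕ) + s, by omega⟩, b) := by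
        apply hshift (⟨(i:ℕ) + s, by omega⟩ : Fin n) _ (⟨(j:ℕ) + s, by omega⟩ : Fin m) _ a b
        · show (i:ℕ) + (s+1) = (i:ℕ) + s + 1
          omega
        · show (j:ℕ) + (s+1) = (j:ℕ) + s + 1
          omega
      rw [h1, ih]
  refine ⟨fun k a => Δ ((⟨0, by have := k.isLt; omega⟩ : Fin n), a)
    ((⟨(m - n) + (k:ℕ), by have := k.isLt; omega⟩ : Fin m), (⟨0, hd⟩ : Fin p.natDegree)), ?_⟩
  ext ⟨i, a⟩ ⟨j, b⟩
  have hi := i.isLt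
  have hj := j.isLt
  rw [phi_apply]
  by_cases h : ((i:ℕ) + (m-n) ≤ (j:ℕ)) ∧ ((j:ℕ) - (i:ℕ) - (m-n) < min m n)
  · rw [dif_pos h]
    have hn0 : 0 < n := by omega
    have htm : (j:ℕ) - (i:ℕ) < m := by omega
    -- Δ (i,a) (j,b) = Δ (0,a) (j-i, b)
    have hstep1 : Δ (i,a) (j,b)
        = Δ ((⟨0, hn0⟩ : Fin n), a) ((⟨(j:ℕ) - (i:ℕ), htm⟩ : Fin m), b) := by
      have h2 := hdiag (i:ℕ) ⟨0, hn0⟩ ⟨(j:ℕ) - (i:ℕ), htm⟩ a b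
        (by simp only [Fin.val_mk]; omega) (by simp only [Fin.val_mk]; omega)
      have e1 : (⟨((⟨0, hn0⟩ : Fin n):ℕ) + (i:ℕ), by simp only [Fin.val_mk]; omega⟩ : Fin n)
          = i := Fin.ext (by simp only [Fin.val_mk]; omega)
      have e2 : (⟨((⟨(j:ℕ) - (i:ℕ), htm⟩ : Fin m):ℕ) + (i:ℕ), by
          simp only [Fin.val_mk]; omega⟩ : Fin m) = j := Fin.ext (by
        simp only [Fin.val_mk]; omega)
      rw [e1, e2] at h2
      exact h2
    -- the block at (0, j-i) is polyMat of its first column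
    set M : Matrix (Fin p.natDegree) (Fin p.natDegree) F :=
      Matrix.of (fun a b => Δ ((⟨0, hn0⟩ : Fin n), a) ((⟨(j:ℕ) - (i:ℕ), htm⟩ : Fin m), b))
      with hM
    have hMC : M * companionMatrix p = companionMatrix p * M :=
      blockA_comm Δ hA _ _
    have hMp := eq_polyMat hd hMC
    have hval := congrFun (congrFun hMp a) b
    simp only [polyMat, Matrix.of_apply] at hval
    -- hval : M a b = (C^b *ᵥ (fun a' => M a' ⟨0,hd⟩)) a
    rw [hstep1]
    show (companionMatrix p ^ (b:ℕ) *ᵥ _) a = M a b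
    rw [hval]
    congr 1
    funext a'
    show Δ ((⟨0, _⟩ : Fin n), a') ((⟨(m - n) + ((j:ℕ) - (i:ℕ) - (m-n)), _⟩ : Fin m),
      (⟨0, hd⟩ : Fin p.natDegree)) = M a' ⟨0, hd⟩
    have e3 : (⟨(m - n) + ((j:ℕ) - (i:ℕ) - (m-n)), by omega⟩ : Fin m)
        = (⟨(j:ℕ) - (i:ℕ), htm⟩ : Fin m) := Fin.ext (by simp only [Fin.val_mk]; omega)
    rw [e3]
    rfl
  · rw [dif_neg h]
    -- the condition fails only if j < i + (m-n)
    have hlt : (j:ℕ) < (i:ℕ) + (m - n) := by omega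
    by_cases hji : (j:ℕ) < (i:ℕ)
    · -- go up-left to column 0
      have hm0 : 0 < m := by omega
      have hij : (i:ℕ) - (j:ℕ) < n := by omega
      have h2 := hdiag (j:ℕ) ⟨(i:ℕ) - (j:ℕ), hij⟩ ⟨0, hm0⟩ a b
        (by simp only [Fin.val_mk]; omega) (by simp only [Fin.val_mk]; omega)
      have e1 : (⟨((⟨(i:ℕ) - (j:ℕ), hij⟩ : Fin n):ℕ) + (j:ℕ), by
          simp only [Fin.val_mk]; omega⟩ : Fin n) = i := Fin.ext (by
        simp only [Fin.val_mk]; omega)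
      have e2 : (⟨((⟨0, hm0⟩ : Fin m):ℕ) + (j:ℕ), by
          simp only [Fin.val_mk]; omega⟩ : Fin m) = j := Fin.ext (by
        simp only [Fin.val_mk]; omega)
      rw [e1, e2] at h2
      rw [h2]
      exact (hzeroL _ _ _ _ (by simp only [Fin.val_mk]) (by simp only [Fin.val_mk]; omega)).symm
    · -- go down-right to the bottom row
      have hs : (i:ℕ) + (n - 1 - (i:ℕ)) < n := by omega
      have hjs : (j:ℕ) + (n - 1 - (i:ℕ)) < m := by omega
      have h2 := hdiag (n - 1 - (i:ℕ)) i j a b hs hjs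
      rw [← h2]
      exact (hzeroB _ _ _ _ (by simp only [Fin.val_mk]; omega) (by
        simp only [Fin.val_mk]; omega)).symm

end GenJordanAux

/-- A matrix `Δ` intertwines `J(p, m)` and `J(p, n)` iff it commutes with the
diagonal action of `K = F[X]/(p)` (i.e. with `id ⊗ x_p`) and intertwines the
shifts (`Δ (N_m ⊗ id) = (N_n ⊗ id) Δ`); moreover the space of such intertwiners
has `F`-dimension `d · min(m, n)` where `d = deg p`. -/
theorem genJordan_intertwiner_iff {F : Type*} [Field F] [CharZero F]
    (p : Polynomial F) (hpm : p.Monic) (hpi : Irreducible p) (m n : ℕ) :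
    (∀ Δ : Matrix (Fin n × Fin p.natDegree) (Fin m × Fin p.natDegree) F,
      Δ * genJordan p m = genJordan p n * Δ ↔
        (Δ * ((1 : Matrix (Fin m) (Fin m) F) ⊗ₖ companionMatrix p)
            = ((1 : Matrix (Fin n) (Fin n) F) ⊗ₖ companionMatrix p) * Δ ∧
         Δ * (jordanShift F m ⊗ₖ (1 : Matrix (Fin p.natDegree) (Fin p.natDegree) F))
            = (jordanShift F n ⊗ₖ (1 : Matrix (Fin p.natDegree) (Fin p.natDegree) F)) * Δ)) ∧
    Module.finrank F
      (LinearMap.ker (sylvesterMap (genJordan p m) (genJordan p n)))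
        = p.natDegree * min m n := by
  have hd : 0 < p.natDegree := GenJordanAux.dpos p hpm hpi
  have part1 : ∀ Δ : Matrix (Fin n × Fin p.natDegree) (Fin m × Fin p.natDegree) F,
      Δ * genJordan p m = genJordan p n * Δ ↔
        (Δ * ((1 : Matrix (Fin m) (Fin m) F) ⊗ₖ companionMatrix p)
            = ((1 : Matrix (Fin n) (Fin n) F) ⊗ₖ companionMatrix p) * Δ ∧
         Δ * (jordanShift F m ⊗ₖ (1 : Matrix (Fin p.natDegree) (Fin p.natDegree) F))
            = (jordanShift F n ⊗ₖ (1 : Matrix (Fin p.natDegree) (Fin p.natDegree) F)) * Δ) := by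
    intro Δ
    constructor
    · exact fun hJ => GenJordanAux.hard_direction hpm hpi Δ hJ
    · rintro ⟨hA, hB⟩
      rw [genJordan, genJordan, Matrix.mul_add, Matrix.add_mul, hA, hB]
  refine ⟨part1, ?_⟩
  have hrange : LinearMap.range (GenJordanAux.phi (F := F) p m n)
      = LinearMap.ker (sylvesterMap (genJordan p m) (genJordan p n)) := by
    apply le_antisymm
    · rintro Δ ⟨c, rfl⟩
      rw [LinearMap.mem_ker]
      show GenJordanAux.phi p m n c * genJordan p m
          - genJordan p n * GenJordanAux.phi p m n c = 0
      rw [sub_eq_zero]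
      exact (part1 _).mpr
        ⟨GenJordanAux.phi_condA hpm hpi c, GenJordanAux.phi_condB c⟩
    · intro Δ hΔ
      rw [LinearMap.mem_ker] at hΔ
      have hJ : Δ * genJordan p m = genJordan p n * Δ := by
        have h0 : Δ * genJordan p m - genJordan p n * Δ = 0 := hΔ
        rwa [sub_eq_zero] at h0
      obtain ⟨hA, hB⟩ := (part1 Δ).mp hJ
      exact GenJordanAux.exists_phi hpm hpi Δ hA hB
  have h1 : Module.finrank F
      (LinearMap.ker (sylvesterMap (genJordan p m) (genJordan p n)))
      = Module.finrank F (Fin (min m n) → Fin p.natDegree → F) := by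
    rw [← hrange]
    exact LinearMap.finrank_range_of_inj (GenJordanAux.phi_injective hd)
  rw [h1, Module.finrank_pi_fintype]
  simp [Module.finrank_fintype_fun_eq_card, Finset.sum_const, Nat.mul_comm]
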